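/- (Euler formula for mixed-power homogeneous operators.) Let V, W be real normed spaces of complex-valued functions (or more abstractly, let V, W be real Banach spaces with a complex scalar multiplication), let H : V → W be Fréchet differentiable at φ, and suppose H(kφ) = k^{(a,b)}·H(φ) for all k in a neighborhood of 1 in ℂ, where k^{(a,b)} = exp(a·ln|k| + i·b·arg k). Then for every η ∈ ℂ, the Fréchet derivative satisfies DH(φ)(η·φ) = (a·Re η + i·b·Im η)·H(φ). -/

import Mathlib

/-- The mixed `(a,b)` power of a complex scalar `k` (principal argument). -/
noncomputable def mixedPow (k a b : ℂ) : ℂ :=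
  Complex.exp (a * Real.log ‖k‖ + Complex.I * b * k.arg)

/-- Euler's formula for mixed-power homogeneous operators: if `H : V → W` is Fréchet
differentiable (over `ℝ`) at `φ` with derivative `D`, and `H(kφ) = k^{(a,b)} • H(φ)` for
all complex `k` near `1`, then `D(η•φ) = (a·Re η + i·b·Im η) • H(φ)` for every `η ∈ ℂ`. -/
theorem euler_mixedPow_homogeneous
    {V W : Type*} [NormedAddCommGroup V] [NormedSpace ℂ V]
    [NormedAddCommGroup W] [NormedSpace ℂ W]
    (H : V → W) (φ : V) (a b : ℂ) (D : V →L[ℝ] W)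
    (hD : HasFDerivAt H D φ)
    (hhom : ∀ᶠ k in nhds (1 : ℂ), H (k • φ) = mixedPow k a b • H φ) :
    ∀ η : ℂ, D (η • φ) = (a * (η.re : ℂ) + Complex.I * b * (η.im : ℂ)) • H φ := by
  -- the ℝ-linear map k ↦ k • φ
  set L : ℂ →L[ℝ] V := (((ContinuousLinearMap.id ℂ ℂ).smulRight φ).restrictScalars ℝ) with hLdef
  -- the ℝ-linear map η ↦ a * η.re + I * b * η.im
  set c : ℂ →L[ℝ] ℂ :=
    a • (Complex.ofRealCLM.comp Complex.reCLM) +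
      (Complex.I * b) • (Complex.ofRealCLM.comp Complex.imCLM) with hcdef
  have hc : ∀ η : ℂ, c η = a * (η.re : ℂ) + Complex.I * b * (η.im : ℂ) := by
    intro η; simp [hcdef, mul_comm]
  -- derivative of H(k•φ) at k = 1
  have h1 : HasFDerivAt (fun k : ℂ => H (k • φ)) (D.comp L) 1 := by
    have hLd : HasFDerivAt (fun k : ℂ => k • φ) L 1 := by
      have := L.hasFDerivAt (x := (1 : ℂ))
      convert this using 1
      funext k; simp [hLdef]
    have hD' : HasFDerivAt H D ((fun k : ℂ => k • φ) 1) := by simpa using hD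
    exact hD'.comp (1 : ℂ) hLd
  -- derivative of log at 1
  have hlog : HasFDerivAt Complex.log
      (((1 : ℂ →L[ℂ] ℂ).smulRight 1).restrictScalars ℝ) 1 := by
    have := (Complex.hasDerivAt_log (by simp : (1 : ℂ) ∈ Complex.slitPlane)).hasFDerivAt
    rw [show ((1 : ℂ →L[ℂ] ℂ).smulRight (1 : ℂ)) = ContinuousLinearMap.toSpanSingleton ℂ 1 from by
      ext; simp]
    simpa using this.restrictScalars ℝ
  -- derivative of the exponent
  have hψ : HasFDerivAt
      (fun k : ℂ => a * (Real.log ‖k‖ : ℂ) + Complex.I * b * (k.arg : ℂ)) c 1 := by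
    have hceq : c.comp (((1 : ℂ →L[ℂ] ℂ).smulRight 1).restrictScalars ℝ) = c := by
      ext η <;> simp
    have hcomp : HasFDerivAt (fun k : ℂ => c (Complex.log k)) c 1 := by
      have := (c.hasFDerivAt (x := Complex.log 1)).comp (1 : ℂ) hlog
      rw [hceq] at this
      exact this
    have heq : (fun k : ℂ => c (Complex.log k)) =
        fun k : ℂ => a * (Real.log ‖k‖ : ℂ) + Complex.I * b * (k.arg : ℂ) := by
      funext k; rw [hc]; simp [Complex.log_re, Complex.log_im]
    rw [← heq]
    exact hcomp
  -- derivative of exp at 0 and composite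
  have hψ1 : (fun k : ℂ => a * (Real.log ‖k‖ : ℂ) + Complex.I * b * (k.arg : ℂ)) 1
      = 0 := by simp
  have hexp : HasFDerivAt Complex.exp
      (((1 : ℂ →L[ℂ] ℂ).smulRight 1).restrictScalars ℝ) (0 : ℂ) := by
    have := (Complex.hasDerivAt_exp 0).hasFDerivAt
    rw [show ((1 : ℂ →L[ℂ] ℂ).smulRight (1 : ℂ)) = ContinuousLinearMap.toSpanSingleton ℂ 1 from by
      ext; simp]
    simpa using this.restrictScalars ℝ
  have hmix : HasFDerivAt (fun k : ℂ => mixedPow k a b) c 1 := by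
    have hceq : (((1 : ℂ →L[ℂ] ℂ).smulRight 1).restrictScalars ℝ).comp c = c := by
      ext η <;> simp
    have hcomp := (hψ1 ▸ hexp).comp (1 : ℂ) hψ
    rw [hceq] at hcomp
    exact hcomp
  have hG : HasFDerivAt (fun k : ℂ => mixedPow k a b • H φ) (c.smulRight (H φ)) 1 :=
    hmix.smul_const (H φ)
  have hfin : D.comp L = c.smulRight (H φ) :=
    h1.unique (hG.congr_of_eventuallyEq hhom)
  intro η
  have := congrFun (congrArg (fun (T : ℂ →L[ℝ] W) => (T : ℂ → W)) hfin) η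
  simpa [hLdef, hc η] using this
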